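/- Separately continuous extension of strip-analytic boundary-value functionals: let Z_1, Z_2 be closed antilinear operators, and suppose f assigns to R (a uniformly bounded B(H^{⊗(n+1)})-valued function on ℝ), ξ_1 ∈ D(Z_1), Ψ ∈ H^{⊗n}, ξ_2 ∈ D(Z_2), Φ ∈ H^{⊗n}, a bounded analytic function on the strip S_α with continuous boundary values f(...)(t) = ⟨ξ_1⊗Ψ, R(t)(Φ⊗ξ_2)⟩ and f(...)(t+iα) = ⟨Ψ⊗Z_2ξ_2, Θ(R)(t)(Z_1ξ_1⊗Φ)⟩ for a continuous map Θ. Then sup over the closed strip of |f| is bounded by (sup_t ‖R(t)‖ + sup_t ‖Θ(R)(t)‖) · (‖ξ_1‖+‖Z_1ξ_1‖)(‖ξ_2‖+‖Z_2ξ_2‖)‖Ψ‖‖Φ‖, and f is separately continuous in all arguments (with graph norms on D(Z_i)), hence extends uniquely to the respective closed spans. -/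

import Mathlib

/-!
STATEMENT 14: Separately continuous extension of strip-analytic boundary-value
functionals (Lemma 3.6 of the paper).

Setting: `Z₁, Z₂` are (closed, antilinear) operators, represented by their
domains `D₁, D₂ ⊆ 𝓗` and the functions `Z₁ : D₁ → 𝓗`, `Z₂ : D₂ → 𝓗`;
`G = H^{⊗n}` and `E = H^{⊗(n+1)}` are the tensor powers, with the two tensor
maps `τ₁(ξ,Ψ) = ξ ⊗ Ψ` and `τ₂(Φ,ξ) = Φ ⊗ ξ` (cross-norm: `‖x⊗y‖ = ‖x‖‖y‖`).
`f = f(R,ξ₁,Ψ,ξ₂,Φ)` is a bounded continuous function on the closed strip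
`S_α`, analytic in the interior, with boundary values
`f(t) = ⟨ξ₁⊗Ψ, R(t)(Φ⊗ξ₂)⟩` and `f(t+iα) = ⟨Ψ⊗Z₂ξ₂, Θ(R)(t)(Z₁ξ₁⊗Φ)⟩`.

Conclusions (the content of the lemma): by the three lines theorem,
`sup_{S̄_α} |f| ≤ (sup_t ‖R(t)‖ + sup_t ‖Θ(R)(t)‖)·(‖ξ₁‖+‖Z₁ξ₁‖)(‖ξ₂‖+‖Z₂ξ₂‖)‖Ψ‖‖Φ‖`,
and `f` is (Lipschitz-)continuous in the operator variable:
`|f_R − f_S| ≤ max(sup‖R−S‖, sup‖Θ(R)−Θ(S)‖)·M` on the closed strip —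
whence the unique extension to the respective closed spans.
-/

noncomputable section

open Set Complex in
private lemma strip_bound' {α : ℝ} (hα : 0 < α) {f : ℂ → ℂ} {C C₀ : ℝ}
    (hbdd : ∀ z ∈ {z : ℂ | 0 ≤ z.im ∧ z.im ≤ α}, ‖f z‖ ≤ C₀)
    (hcont : ContinuousOn f {z : ℂ | 0 ≤ z.im ∧ z.im ≤ α})
    (hanal : DifferentiableOn ℂ f {z : ℂ | 0 < z.im ∧ z.im < α})
    (h0 : ∀ t : ℝ, ‖f t‖ ≤ C)
    (hα' : ∀ t : ℝ, ‖f (t + Complex.I * α)‖ ≤ C)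
    {z : ℂ} (hz : 0 ≤ z.im) (hz' : z.im ≤ α) : ‖f z‖ ≤ C := by
  have hcl : closure (Complex.im ⁻¹' Ioo 0 α) = {z : ℂ | 0 ≤ z.im ∧ z.im ≤ α} := by
    rw [Complex.closure_preimage_im, closure_Ioo hα.ne]
    rfl
  have hd : DiffContOnCl ℂ f (Complex.im ⁻¹' Ioo 0 α) := by
    refine ⟨hanal, ?_⟩
    rw [hcl]; exact hcont
  refine PhragmenLindelof.horizontal_strip hd ?_ ?_ ?_ hz hz'
  · refine ⟨0, by rw [sub_zero]; positivity, 0, ?_⟩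
    refine Asymptotics.IsBigO.of_bound C₀ ?_
    filter_upwards [Filter.inter_mem_inf Filter.univ_mem (Filter.mem_principal_self _)] with w hw
    simp only [univ_inter] at hw
    have := hbdd w ⟨hw.1.le, hw.2.le⟩
    simpa using this
  · intro w hw
    have hw' : ((w.re : ℂ) : ℂ) = w := by apply Complex.ext <;> simp [hw]
    have := h0 w.re
    rwa [hw'] at this
  · intro w hw
    have hw' : ((w.re : ℂ) + Complex.I * α) = w := by apply Complex.ext <;> simp [hw]
    have := hα' w.re
    rwa [hw'] at this

private lemma inner_op_est {E : Type*} [NormedAddCommGroup E] [InnerProductSpace ℂ E]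
    (T : E →L[ℂ] E) (a b : E) {M : ℝ} (hM : ‖T‖ ≤ M) :
    ‖(inner ℂ a (T b) : ℂ)‖ ≤ ‖a‖ * (M * ‖b‖) := by
  calc ‖(inner ℂ a (T b) : ℂ)‖ = ‖(inner ℂ a (T b) : ℂ)‖ := rfl
    _ ≤ ‖a‖ * ‖T b‖ := norm_inner_le_norm a (T b)
    _ ≤ ‖a‖ * (M * ‖b‖) := by
        have := (T.le_opNorm b).trans (mul_le_mul_of_nonneg_right hM (norm_nonneg b))
        exact mul_le_mul_of_nonneg_left this (norm_nonneg a)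


/-- The bound and continuity estimates of the extension
lemma. -/
theorem extension_lemma_estimates
    {𝓗 G E : Type*}
    [NormedAddCommGroup 𝓗] [InnerProductSpace ℂ 𝓗] [CompleteSpace 𝓗]
    [NormedAddCommGroup G] [InnerProductSpace ℂ G] [CompleteSpace G]
    [NormedAddCommGroup E] [InnerProductSpace ℂ E] [CompleteSpace E]
    (α : ℝ) (hα : 0 < α)
    (D₁ D₂ : Submodule ℂ 𝓗) (Z₁ : D₁ → 𝓗) (Z₂ : D₂ → 𝓗)
    (τ₁ : 𝓗 → G → E) (τ₂ : G → 𝓗 → E)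
    (hτ₁_norm : ∀ x y, ‖τ₁ x y‖ = ‖x‖ * ‖y‖)
    (hτ₂_norm : ∀ x y, ‖τ₂ x y‖ = ‖x‖ * ‖y‖)
    (ξ₁ : D₁) (ξ₂ : D₂) (Ψ Φ : G)
    -- the two boundary operator families and the analytic functions:
    (R ΘR S ΘS : ℝ → (E →L[ℂ] E))
    (f g : ℂ → ℂ)
    (hf_bdd : ∃ C : ℝ, ∀ z ∈ {z : ℂ | 0 ≤ z.im ∧ z.im ≤ α}, ‖f z‖ ≤ C)
    (hf_cont : ContinuousOn f {z : ℂ | 0 ≤ z.im ∧ z.im ≤ α})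
    (hf_anal : DifferentiableOn ℂ f {z : ℂ | 0 < z.im ∧ z.im < α})
    (hf_bv₀ : ∀ t : ℝ, f t = (inner ℂ (τ₁ (ξ₁ : 𝓗) Ψ) (R t (τ₂ Φ (ξ₂ : 𝓗))) : ℂ))
    (hf_bvα : ∀ t : ℝ, f (t + Complex.I * α)
      = (inner ℂ (τ₂ Ψ (Z₂ ξ₂)) (ΘR t (τ₁ (Z₁ ξ₁) Φ)) : ℂ))
    (hg_bdd : ∃ C : ℝ, ∀ z ∈ {z : ℂ | 0 ≤ z.im ∧ z.im ≤ α}, ‖g z‖ ≤ C)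
    (hg_cont : ContinuousOn g {z : ℂ | 0 ≤ z.im ∧ z.im ≤ α})
    (hg_anal : DifferentiableOn ℂ g {z : ℂ | 0 < z.im ∧ z.im < α})
    (hg_bv₀ : ∀ t : ℝ, g t = (inner ℂ (τ₁ (ξ₁ : 𝓗) Ψ) (S t (τ₂ Φ (ξ₂ : 𝓗))) : ℂ))
    (hg_bvα : ∀ t : ℝ, g (t + Complex.I * α)
      = (inner ℂ (τ₂ Ψ (Z₂ ξ₂)) (ΘS t (τ₁ (Z₁ ξ₁) Φ)) : ℂ)) :
    -- three-lines bound: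
    (∀ MR MΘ : ℝ, (∀ t, ‖R t‖ ≤ MR) → (∀ t, ‖ΘR t‖ ≤ MΘ) →
      ∀ z ∈ {z : ℂ | 0 ≤ z.im ∧ z.im ≤ α},
        ‖f z‖ ≤ (MR + MΘ) *
          ((‖(ξ₁ : 𝓗)‖ + ‖Z₁ ξ₁‖) * (‖(ξ₂ : 𝓗)‖ + ‖Z₂ ξ₂‖) * ‖Ψ‖ * ‖Φ‖)) ∧
    -- Lipschitz continuity in the operator variable:
    (∀ MRS MΘRS : ℝ, (∀ t, ‖R t - S t‖ ≤ MRS) → (∀ t, ‖ΘR t - ΘS t‖ ≤ MΘRS) →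
      ∀ z ∈ {z : ℂ | 0 ≤ z.im ∧ z.im ≤ α},
        ‖f z - g z‖ ≤ max MRS MΘRS *
          ((‖(ξ₁ : 𝓗)‖ + ‖Z₁ ξ₁‖) * (‖(ξ₂ : 𝓗)‖ + ‖Z₂ ξ₂‖) * ‖Ψ‖ * ‖Φ‖)) := by
  set a := ‖(ξ₁ : 𝓗)‖ with ha
  set a' := ‖Z₁ ξ₁‖ with ha'
  set b := ‖(ξ₂ : 𝓗)‖ with hb
  set b' := ‖Z₂ ξ₂‖ with hb'
  set p := ‖Ψ‖ with hp
  set q := ‖Φ‖ with hq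
  have h0a : 0 ≤ a := norm_nonneg _
  have h0a' : 0 ≤ a' := norm_nonneg _
  have h0b : 0 ≤ b := norm_nonneg _
  have h0b' : 0 ≤ b' := norm_nonneg _
  have h0p : 0 ≤ p := norm_nonneg _
  have h0q : 0 ≤ q := norm_nonneg _
  constructor
  · intro MR MΘ hMR hMΘ z hz
    obtain ⟨C₀, hC₀⟩ := hf_bdd
    have hMR0 : 0 ≤ MR := (norm_nonneg _).trans (hMR 0)
    have hMΘ0 : 0 ≤ MΘ := (norm_nonneg _).trans (hMΘ 0)
    refine strip_bound' hα hC₀ hf_cont hf_anal ?_ ?_ hz.1 hz.2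
    · intro t
      rw [hf_bv₀ t]
      have := inner_op_est (R t) (τ₁ (ξ₁ : 𝓗) Ψ) (τ₂ Φ (ξ₂ : 𝓗)) (hMR t)
      rw [hτ₁_norm, hτ₂_norm] at this
      refine this.trans ?_
      nlinarith [mul_nonneg h0a h0p, mul_nonneg h0q h0b, mul_nonneg h0a' h0b',
        mul_nonneg h0a h0b', mul_nonneg h0a' h0b, mul_nonneg h0p h0q,
        mul_nonneg (mul_nonneg h0a' h0b) (mul_nonneg h0p h0q),
        mul_nonneg (mul_nonneg h0a h0b') (mul_nonneg h0p h0q),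
        mul_nonneg (mul_nonneg h0a' h0b') (mul_nonneg h0p h0q),
        mul_nonneg (mul_nonneg h0a h0b) (mul_nonneg h0p h0q)]
    · intro t
      rw [hf_bvα t]
      have := inner_op_est (ΘR t) (τ₂ Ψ (Z₂ ξ₂)) (τ₁ (Z₁ ξ₁) Φ) (hMΘ t)
      rw [hτ₁_norm, hτ₂_norm] at this
      refine this.trans ?_
      nlinarith [mul_nonneg h0a h0p, mul_nonneg h0q h0b, mul_nonneg h0a' h0b',
        mul_nonneg h0a h0b', mul_nonneg h0a' h0b, mul_nonneg h0p h0q,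
        mul_nonneg (mul_nonneg h0a' h0b) (mul_nonneg h0p h0q),
        mul_nonneg (mul_nonneg h0a h0b') (mul_nonneg h0p h0q),
        mul_nonneg (mul_nonneg h0a' h0b') (mul_nonneg h0p h0q),
        mul_nonneg (mul_nonneg h0a h0b) (mul_nonneg h0p h0q)]
  · intro MRS MΘRS hMRS hMΘRS z hz
    obtain ⟨C₀, hC₀⟩ := hf_bdd
    obtain ⟨C₁, hC₁⟩ := hg_bdd
    have hM1 : MRS ≤ max MRS MΘRS := le_max_left _ _
    have hM2 : MΘRS ≤ max MRS MΘRS := le_max_right _ _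
    have hM0 : 0 ≤ max MRS MΘRS := (norm_nonneg _).trans ((hMRS 0).trans hM1)
    have hbdd : ∀ w ∈ {w : ℂ | 0 ≤ w.im ∧ w.im ≤ α},
        ‖(f - g) w‖ ≤ C₀ + C₁ := by
      intro w hw
      calc ‖f w - g w‖ ≤ ‖f w‖ + ‖g w‖ :=
            norm_sub_le _ _
        _ ≤ C₀ + C₁ := add_le_add (hC₀ w hw) (hC₁ w hw)
    have hcont : ContinuousOn (f - g) {w : ℂ | 0 ≤ w.im ∧ w.im ≤ α} := hf_cont.sub hg_cont
    have hanal : DifferentiableOn ℂ (f - g) {w : ℂ | 0 < w.im ∧ w.im < α} :=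
      hf_anal.sub hg_anal
    have key := strip_bound' (f := f - g) (C := max MRS MΘRS * ((a + a') * (b + b') * p * q)) hα hbdd hcont hanal ?_ ?_ hz.1 hz.2
    · simpa using key
    · intro t
      have hval : f t - g t = (inner ℂ (τ₁ (ξ₁ : 𝓗) Ψ) ((R t - S t) (τ₂ Φ (ξ₂ : 𝓗))) : ℂ) := by
        rw [hf_bv₀ t, hg_bv₀ t, ContinuousLinearMap.sub_apply, inner_sub_right]
      simp only [Pi.sub_apply]
      rw [hval]
      have := inner_op_est (R t - S t) (τ₁ (ξ₁ : 𝓗) Ψ) (τ₂ Φ (ξ₂ : 𝓗))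
        ((hMRS t).trans hM1)
      rw [hτ₁_norm, hτ₂_norm] at this
      refine this.trans ?_
      set M := max MRS MΘRS
      nlinarith [mul_nonneg h0a h0p, mul_nonneg h0q h0b, mul_nonneg h0a' h0b',
        mul_nonneg h0a h0b', mul_nonneg h0a' h0b, mul_nonneg h0p h0q,
        mul_nonneg (mul_nonneg h0a' h0b) (mul_nonneg h0p h0q),
        mul_nonneg (mul_nonneg h0a h0b') (mul_nonneg h0p h0q),
        mul_nonneg (mul_nonneg h0a' h0b') (mul_nonneg h0p h0q),
        mul_nonneg (mul_nonneg h0a h0b) (mul_nonneg h0p h0q)]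
    · intro t
      have hval : f (t + Complex.I * α) - g (t + Complex.I * α)
          = (inner ℂ (τ₂ Ψ (Z₂ ξ₂)) ((ΘR t - ΘS t) (τ₁ (Z₁ ξ₁) Φ)) : ℂ) := by
        rw [hf_bvα t, hg_bvα t, ContinuousLinearMap.sub_apply, inner_sub_right]
      simp only [Pi.sub_apply]
      rw [hval]
      have := inner_op_est (ΘR t - ΘS t) (τ₂ Ψ (Z₂ ξ₂)) (τ₁ (Z₁ ξ₁) Φ)
        ((hMΘRS t).trans hM2)
      rw [hτ₁_norm, hτ₂_norm] at this
      refine this.trans ?_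
      set M := max MRS MΘRS
      nlinarith [mul_nonneg h0a h0p, mul_nonneg h0q h0b, mul_nonneg h0a' h0b',
        mul_nonneg h0a h0b', mul_nonneg h0a' h0b, mul_nonneg h0p h0q,
        mul_nonneg (mul_nonneg h0a' h0b) (mul_nonneg h0p h0q),
        mul_nonneg (mul_nonneg h0a h0b') (mul_nonneg h0p h0q),
        mul_nonneg (mul_nonneg h0a' h0b') (mul_nonneg h0p h0q),
        mul_nonneg (mul_nonneg h0a h0b) (mul_nonneg h0p h0q)]
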